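/- Let (A, v, w) be an n-dimensional triple whose columns C_1, …, C_n satisfy C_k = C_1 − e_1 for some k with 1 < k ≤ n, where e_1 = (1, 0, …, 0)ᵗ. Let A_{11} be the (n−1)×(n−1) matrix obtained from A by deleting the first row and first column, let ṽ = (v_2, …, v_n)ᵗ, and let w̃ = (w̃_2, …, w̃_n)ᵗ = A_{11}⁻¹·ṽ. Then w̃_j = w_j for all j ≠ k (2 ≤ j ≤ n), and w̃_k = w_1 + w_k. -/
import Mathlib


open Matrix

/-- The vector `w = A⁻¹ · v`, computed over the reals. -/
noncomputable def wvec {n : ℕ} (A : Matrix (Fin n) (Fin n) ℤ) (v : Fin n → ℝ) : Fin n → ℝ :=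
  (A.map (Int.cast : ℤ → ℝ))⁻¹ *ᵥ v

/-- `(A, v, w)` is an `n`-dimensional triple, where `w = wvec A v` is determined by `A` and
`v`: the entries of `A` are nonnegative integers, `det A = ±1`, the entries of `v` are
positive real numbers which are linearly independent over `ℚ`, and all entries of
`w = A⁻¹ v` are positive. -/
structure IsTriple {n : ℕ} (A : Matrix (Fin n) (Fin n) ℤ) (v : Fin n → ℝ) : Prop where
  nonneg : ∀ i j, 0 ≤ A i j
  det_pm : A.det = 1 ∨ A.det = -1
  v_pos : ∀ i, 0 < v i
  v_indep : LinearIndependent ℚ v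
  w_pos : ∀ i, 0 < wvec A v i

theorem minor_det {n : ℕ}
    (A : Matrix (Fin (n + 1)) (Fin (n + 1)) ℤ) (k : Fin (n + 1)) (hk : k ≠ 0)
    (hcol : ∀ i, A i k = A i 0 - (if i = 0 then 1 else 0)) :
    (A.submatrix Fin.succ Fin.succ).det = A.det := by
  set S : Matrix (Fin (n + 1)) (Fin (n + 1)) ℤ := A.submatrix id (Equiv.swap 0 k) with hS
  set B : Matrix (Fin (n + 1)) (Fin (n + 1)) ℤ :=
    S.updateCol 0 (fun i => if i = 0 then (1 : ℤ) else 0) with hB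
  have hdetS : S.det = - A.det := by
    rw [hS, det_permute', Equiv.Perm.sign_swap (Ne.symm hk)]
    simp
  have hBdet : B.det = A.det := by
    have he1 : (fun i => if i = 0 then (1 : ℤ) else 0)
        = (fun i => A i 0) + fun i => (-1 : ℤ) * A i k := by
      funext i
      have := hcol i
      simp only [Pi.add_apply]
      omega
    rw [hB, he1, det_updateCol_add]
    have h1 : (S.updateCol 0 fun i => A i 0).det = 0 := by
      apply det_zero_of_column_eq hk.symm
      intro i
      rw [updateCol_apply, updateCol_apply]
      simp [hS, Equiv.swap_apply_right, if_neg hk]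
    have h2 : (S.updateCol 0 fun i => (-1 : ℤ) * A i k).det = - S.det := by
      have : (fun i => (-1 : ℤ) * A i k) = (-1 : ℤ) • (fun i => A i k) := by
        funext i; simp
      rw [this, det_updateCol_smul]
      have : S.updateCol 0 (fun i => A i k) = S := by
        ext i j
        rw [updateCol_apply]
        split
        · subst j; simp [hS, Equiv.swap_apply_left]
        · rfl
      rw [this]; ring
    rw [h1, h2, hdetS]; ring
  have hsub : B.submatrix Fin.succ Fin.succ = A.submatrix Fin.succ Fin.succ := by
    ext i j
    simp only [submatrix_apply, hB, updateCol_apply]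
    rw [if_neg (Fin.succ_ne_zero j)]
    by_cases hjk : j.succ = k
    · have : Equiv.swap (0 : Fin (n+1)) k j.succ = 0 := by
        rw [hjk, Equiv.swap_apply_right]
      simp only [hS, submatrix_apply, id_eq, this]
      rw [hjk]
      have h2 := hcol i.succ
      rw [if_neg (Fin.succ_ne_zero i)] at h2
      omega
    · have : Equiv.swap (0 : Fin (n+1)) k j.succ = j.succ :=
        Equiv.swap_apply_of_ne_of_ne (Fin.succ_ne_zero j) hjk
      simp [hS, this]
  have hexp : B.det = (B.submatrix Fin.succ Fin.succ).det := by
    rw [det_succ_column_zero]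
    rw [Finset.sum_eq_single 0]
    · simp [hB, updateCol_apply]
    · intro i _ hi
      have : B i 0 = 0 := by simp [hB, updateCol_apply, if_neg hi]
      rw [this]; ring
    · simp
  rw [← hsub, ← hexp, hBdet]


/-- **Lemma 10, second part.** Let `(A, v, w)` be a triple (of dimension `n + 1`) whose
columns satisfy `C_k = C_1 - e_1` for some `k ≠ 1` (here the columns and rows are indexed
by `Fin (n + 1)`, so the first index is `0` and the hypothesis reads
`A i k = A i 0 - (e_1)_i` for all `i`).  Let `A₁₁ = A.submatrix Fin.succ Fin.succ` be the
matrix obtained from `A` by deleting the first row and first column, let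
`ṽ = v ∘ Fin.succ` be obtained from `v` by deleting the first entry, and let
`w̃ = A₁₁⁻¹ · ṽ` (indexed by `Fin n`, the entry `w̃ i` corresponding to the index
`i.succ` of `w`).  Then `w̃_j = w_j` for all `j ≠ k`, and `w̃_k = w_1 + w_k`. -/
theorem wtilde_of_minor {n : ℕ}
    (A : Matrix (Fin (n + 1)) (Fin (n + 1)) ℤ) (v : Fin (n + 1) → ℝ)
    (h : IsTriple A v) (k : Fin (n + 1)) (hk : k ≠ 0)
    (hcol : ∀ i, A i k = A i 0 - (if i = 0 then 1 else 0)) :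
    (∀ i : Fin n, i.succ ≠ k →
        wvec (A.submatrix Fin.succ Fin.succ) (v ∘ Fin.succ) i = wvec A v i.succ) ∧
    (∀ i : Fin n, i.succ = k →
        wvec (A.submatrix Fin.succ Fin.succ) (v ∘ Fin.succ) i = wvec A v 0 + wvec A v k) := by
  set w := wvec A v with hw
  set A' := A.map (Int.cast : ℤ → ℝ) with hA'
  have hdetA' : A'.det = (A.det : ℝ) := ((Int.castRingHom ℝ).map_det A).symm
  have hdet_unit : IsUnit A'.det := by
    rw [hdetA']
    rcases h.det_pm with h1 | h1 <;> rw [h1] <;> simp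
  have hAw : A' *ᵥ w = v := by
    rw [hw]
    show A' *ᵥ (A'⁻¹ *ᵥ v) = v
    rw [mulVec_mulVec, mul_nonsing_inv _ hdet_unit, one_mulVec]
  -- the minor
  set M := (A.submatrix Fin.succ Fin.succ).map (Int.cast : ℤ → ℝ) with hM
  have hMdet : IsUnit M.det := by
    have : M.det = ((A.submatrix Fin.succ Fin.succ).det : ℝ) :=
      ((Int.castRingHom ℝ).map_det _).symm
    rw [this, minor_det A k hk hcol]
    rcases h.det_pm with h1 | h1 <;> rw [h1] <;> simp
  obtain ⟨k', rfl⟩ : ∃ k' : Fin n, k = k'.succ := by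
    rcases Fin.eq_zero_or_eq_succ k with h0 | hs
    · exact absurd h0 hk
    · exact hs
  set wt : Fin n → ℝ := fun j => w j.succ + if j = k' then w 0 else 0 with hwt
  have hMwt : M *ᵥ wt = v ∘ Fin.succ := by
    funext i
    have hv : v i.succ = ∑ j : Fin (n+1), (A i.succ j : ℝ) * w j := by
      rw [← hAw]; simp [Matrix.mulVec, dotProduct, hA']
    simp only [Matrix.mulVec, dotProduct, hM, map_apply, submatrix_apply, hwt,
      Function.comp_apply]
    rw [hv, Fin.sum_univ_succ]
    have hsplit : ∑ j : Fin n, (A i.succ j.succ : ℝ) * (w j.succ + if j = k' then w 0 else 0)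
        = (∑ j : Fin n, (A i.succ j.succ : ℝ) * w j.succ)
          + (A i.succ k'.succ : ℝ) * w 0 := by
      have hterm : ∀ j : Fin n, (A i.succ j.succ : ℝ) * (w j.succ + if j = k' then w 0 else 0)
          = (A i.succ j.succ : ℝ) * w j.succ
            + (if j = k' then (A i.succ j.succ : ℝ) * w 0 else 0) := by
        intro j; split <;> ring
      simp_rw [hterm]
      rw [Finset.sum_add_distrib,
        Finset.sum_ite_eq' Finset.univ k' (fun j => (A i.succ j.succ : ℝ) * w 0)]
      simp
    rw [hsplit]
    have : A i.succ k'.succ = A i.succ 0 := by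
      have := hcol i.succ
      rw [if_neg (Fin.succ_ne_zero i)] at this
      omega
    rw [this]
    ring
  have hmain : wvec (A.submatrix Fin.succ Fin.succ) (v ∘ Fin.succ) = wt := by
    rw [wvec, ← hM, ← hMwt, mulVec_mulVec, nonsing_inv_mul _ hMdet, one_mulVec]
  constructor
  · intro i hi
    rw [hmain, hwt]
    simp only [if_neg (fun hh : i = k' => hi (by rw [hh]))]
    simp [hw]
  · intro i hi
    have : i = k' := Fin.succ_injective _ hi
    subst this
    rw [hmain, hwt]
    simp [hw, add_comm]
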